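/- Let n ≥ 3 be an integer and w_1, ..., w_n be strictly positive real numbers. For i ≠ j define α_{ij} := (w_i + w_j)/((n−1) w_j) − (Σ_{l≠i,j} w_l)/((n−1)(n−2) w_j). Then Σ_{j≠i} α_{ij} w_j = w_i for every i and Σ_{i≠j} α_{ij} = 1 for every j. Moreover, if (n−2)(w_i + w_j) ≥ Σ_{l≠i,j} w_l for all pairs i ≠ j, then α_{ij} ≥ 0 for all i ≠ j. -/

import Mathlib

open Finset

/-- Explicit n-participant solution of the fair-transfer linear system:
`α_{ij} = (w_i + w_j)/((n-1) w_j) - (∑_{l≠i,j} w_l)/((n-1)(n-2) w_j)` satisfies row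
fairness and unit column sums, and is non-negative under the properness condition
`(n-2)(w_i + w_j) ≥ ∑_{l≠i,j} w_l`. -/
theorem stmt_3 (n : ℕ) (hn : 3 ≤ n) (w : Fin n → ℝ) (hw : ∀ i, 0 < w i)
    (α : Fin n → Fin n → ℝ)
    (hα : ∀ i j, i ≠ j →
      α i j = (w i + w j) / (((n : ℝ) - 1) * w j)
        - (∑ l ∈ (Finset.univ.erase i).erase j, w l) /
            (((n : ℝ) - 1) * ((n : ℝ) - 2) * w j)) :
    (∀ i, ∑ j ∈ Finset.univ.erase i, α i j * w j = w i) ∧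
    (∀ j, ∑ i ∈ Finset.univ.erase j, α i j = 1) ∧
    ((∀ i j, i ≠ j →
        ((n : ℝ) - 2) * (w i + w j) ≥ ∑ l ∈ (Finset.univ.erase i).erase j, w l) →
      ∀ i j, i ≠ j → 0 ≤ α i j) := by
  set N : ℝ := (n : ℝ) with hN
  have hn3 : (3 : ℝ) ≤ N := by rw [hN]; exact_mod_cast hn
  have h1 : N - 1 ≠ 0 := by linarith
  have h2 : N - 2 ≠ 0 := by linarith
  have h1' : 0 < N - 1 := by linarith
  have h2' : 0 < N - 2 := by linarith
  set S : ℝ := ∑ l, w l with hS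
  have hsum_erase : ∀ i : Fin n, ∑ l ∈ Finset.univ.erase i, w l = S - w i := by
    intro i
    rw [Finset.sum_erase_eq_sub (Finset.mem_univ i)]
  have hsum2 : ∀ i j : Fin n, i ≠ j →
      ∑ l ∈ (Finset.univ.erase i).erase j, w l = S - w i - w j := by
    intro i j hij
    rw [Finset.sum_erase_eq_sub (by simp [hij.symm] : j ∈ Finset.univ.erase i),
      hsum_erase i]
  have hcard : ∀ i : Fin n, ((Finset.univ.erase i).card : ℝ) = N - 1 := by
    intro i
    rw [Finset.card_erase_of_mem (Finset.mem_univ i), Finset.card_univ, Fintype.card_fin]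
    have : (1:ℕ) ≤ n := by omega
    push_cast [this]
    ring
  refine ⟨?_, ?_, ?_⟩
  · intro i
    have key : ∀ j ∈ Finset.univ.erase i,
        α i j * w j = ((N - 2) * (w i + w j) - (S - w i - w j)) / ((N - 1) * (N - 2)) := by
      intro j hj
      have hij : i ≠ j := (Finset.ne_of_mem_erase hj).symm
      rw [hα i j hij, hsum2 i j hij]
      have hwj := (hw j).ne'
      field_simp
    have step : ∀ x : Fin n, (N - 2) * (w i + w x) - (S - w i - w x) =
        (N - 1) * w x + ((N - 2) * w i - S + w i) := by intro x; ring
    rw [Finset.sum_congr rfl key, ← Finset.sum_div,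
      Finset.sum_congr rfl (fun x _ => step x), Finset.sum_add_distrib,
      ← Finset.mul_sum, hsum_erase i, Finset.sum_const, nsmul_eq_mul, hcard i]
    field_simp
    ring
  · intro j
    have key : ∀ i ∈ Finset.univ.erase j,
        α i j = ((N - 2) * (w i + w j) - (S - w i - w j)) / ((N - 1) * (N - 2) * w j) := by
      intro i hi
      have hij : i ≠ j := Finset.ne_of_mem_erase hi
      rw [hα i j hij, hsum2 i j hij]
      have hwj := (hw j).ne'
      field_simp
    have step : ∀ x : Fin n, (N - 2) * (w x + w j) - (S - w x - w j) =
        (N - 1) * w x + ((N - 2) * w j - S + w j) := by intro x; ring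
    rw [Finset.sum_congr rfl key, ← Finset.sum_div,
      Finset.sum_congr rfl (fun x _ => step x), Finset.sum_add_distrib,
      ← Finset.mul_sum, hsum_erase j, Finset.sum_const, nsmul_eq_mul, hcard j]
    have hwj := (hw j).ne'
    field_simp
    ring
  · intro hprop i j hij
    have h := hprop i j hij
    rw [hsum2 i j hij] at h
    have heq : α i j = ((N - 2) * (w i + w j) - (S - w i - w j)) / ((N - 1) * (N - 2) * w j) := by
      rw [hα i j hij, hsum2 i j hij]
      have hwj := (hw j).ne'
      field_simp
    rw [heq]
    apply div_nonneg
    · linarith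
    · have hwj := hw j
      positivity
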